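/- Let N be a positive integer, let ν > 0 be a real number, let A be a symmetric positive definite real N×N matrix admitting a factorization A = L Lᵀ with L an invertible real N×N matrix, and let B be a real N×N matrix with xᵀ B x ≥ 0 for every x ∈ ℝᴺ. If u, a ∈ ℝᴺ satisfy (A + ν B) u = A a, then ‖Lᵀ u‖₂ ≤ ‖Lᵀ a‖₂, where ‖·‖₂ denotes the Euclidean norm on ℝᴺ. -/

import Mathlib

open Matrix

/-- Euclidean (`ℓ²`) norm of a vector in `ℝᴺ`. -/
noncomputable def eNorm {n : ℕ} (x : Fin n → ℝ) : ℝ :=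
  ‖(WithLp.equiv 2 (Fin n → ℝ)).symm x‖

lemma eNorm_nonneg {n : ℕ} (x : Fin n → ℝ) : 0 ≤ eNorm x := norm_nonneg _

lemma inner_eq_dot {n : ℕ} (x y : Fin n → ℝ) :
    (inner ℝ ((WithLp.equiv 2 (Fin n → ℝ)).symm x) ((WithLp.equiv 2 (Fin n → ℝ)).symm y) : ℝ)
      = x ⬝ᵥ y := by
  simp [PiLp.inner_apply, dotProduct, mul_comm]

lemma dot_self_eq_eNorm_sq {n : ℕ} (x : Fin n → ℝ) : x ⬝ᵥ x = eNorm x * eNorm x := by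
  rw [← inner_eq_dot, real_inner_self_eq_norm_mul_norm]; rfl

lemma dot_le_eNorm_mul {n : ℕ} (x y : Fin n → ℝ) : x ⬝ᵥ y ≤ eNorm x * eNorm y := by
  rw [← inner_eq_dot]; exact real_inner_le_norm _ _

theorem statement_1 (N : ℕ) (hN : 0 < N) (ν : ℝ) (hν : 0 < ν)
    (A B L : Matrix (Fin N) (Fin N) ℝ)
    (hA : A.PosDef)
    (hAsymm : A.IsSymm)
    (hfac : A = L * Lᵀ)
    (hL : IsUnit L)
    (hB : ∀ x : Fin N → ℝ, 0 ≤ x ⬝ᵥ B.mulVec x)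
    (u a : Fin N → ℝ)
    (heq : (A + ν • B).mulVec u = A.mulVec a) :
    eNorm (Lᵀ.mulVec u) ≤ eNorm (Lᵀ.mulVec a) := by
  set p := Lᵀ.mulVec u with hp
  set q := Lᵀ.mulVec a with hq
  have hdotA : ∀ x y : Fin N → ℝ, x ⬝ᵥ A.mulVec y = (Lᵀ.mulVec x) ⬝ᵥ (Lᵀ.mulVec y) := by
    intro x y
    rw [hfac, ← mulVec_mulVec, dotProduct_mulVec, mulVec_transpose, mulVec_transpose]
  have key : u ⬝ᵥ (A + ν • B).mulVec u = u ⬝ᵥ A.mulVec a := by rw [heq]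
  have expand : u ⬝ᵥ (A + ν • B).mulVec u = u ⬝ᵥ A.mulVec u + ν * (u ⬝ᵥ B.mulVec u) := by
    simp [add_mulVec, smul_mulVec, dotProduct_add, dotProduct_smul, smul_eq_mul]
  have h1 : p ⬝ᵥ p ≤ p ⬝ᵥ q := by
    rw [← hdotA, ← hdotA]
    nlinarith [hB u, expand, key]
  have h2 : p ⬝ᵥ q ≤ eNorm p * eNorm q := dot_le_eNorm_mul p q
  have h3 : eNorm p * eNorm p ≤ eNorm p * eNorm q := by
    rw [← dot_self_eq_eNorm_sq]; exact h1.trans h2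
  rcases eq_or_lt_of_le (eNorm_nonneg p) with h0 | h0
  · rw [← h0]; exact eNorm_nonneg q
  · exact le_of_mul_le_mul_left h3 h0
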